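/- Suppose Ranked Pairs accepts all edges of a directed path from τ_B to τ_A. Then no intermediate transaction τ on this path satisfies w(τ_A, τ) = 1 or w(τ, τ_B) = 1. That is, the path avoids the set R_{τ_A} of transactions that all voters rank after τ_A, and avoids the set P_{τ_B} of transactions that all voters rank before τ_B. -/

import Mathlib

/-- The fraction of the `n` voters (each voter `i` ranking transactions by the
injective rank function `rank i`) that rank `a` before `b`. -/
def voteWeight {V : Type*} (n : ℕ) (rank : Fin n → V → ℕ) (a b : V) : ℚ :=
  ((Finset.univ.filter (fun i : Fin n => rank i a < rank i b)).card : ℚ) / n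

/-- A set `H` of directed edges has a directed cycle. -/
def hasCycle {V : Type*} (H : Set (V × V)) : Prop :=
  ∃ v : V, Relation.TransGen (fun a b : V => (a, b) ∈ H) v v

/-- The greedy (Ranked Pairs) edge-selection process: iterate over the list of
edges, adding each edge to the accumulated set `H` unless doing so would create a
directed cycle in `H`. -/
noncomputable def greedy {V : Type*} : List (V × V) → Set (V × V) → Set (V × V)
  | [], H => H
  | e :: rest, H =>
      greedy rest
        (@ite _ (hasCycle (insert e H)) (Classical.propDecidable _) H (insert e H))

section Aux

variable {V : Type*}

lemma greedy_mono (L : List (V × V)) (H : Set (V × V)) : H ⊆ greedy L H := by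
  induction L generalizing H with
  | nil => exact le_refl _
  | cons e rest ih =>
    rw [greedy]
    split
    · exact ih H
    · exact (Set.subset_insert e H).trans (ih _)

lemma greedy_acyclic (L : List (V × V)) (H : Set (V × V)) (h : ¬ hasCycle H) :
    ¬ hasCycle (greedy L H) := by
  induction L generalizing H with
  | nil => exact h
  | cons e rest ih =>
    rw [greedy]
    split
    · exact ih H h
    · next hc => exact ih _ hc

lemma empty_acyclic : ¬ hasCycle (∅ : Set (V × V)) := by
  rintro ⟨v, hv⟩
  cases hv with
  | single h => exact h
  | tail _ h => exact h

variable [Fintype V] {n : ℕ}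

omit [Fintype V] in
lemma voteWeight_le_one (hn : 0 < n) (rank : Fin n → V → ℕ) (a b : V) : voteWeight n rank a b ≤ 1 := by
  unfold voteWeight
  rw [div_le_one (by exact_mod_cast hn)]
  exact_mod_cast (Finset.card_filter_le _ _).trans (by simp)

omit [Fintype V] in
lemma voteWeight_eq_one_iff (hn : 0 < n) (rank : Fin n → V → ℕ) (a b : V) :
    voteWeight n rank a b = 1 ↔ ∀ i, rank i a < rank i b := by
  unfold voteWeight
  rw [div_eq_one_iff_eq (by exact_mod_cast hn.ne')]
  constructor
  · intro h i
    have hcard : (Finset.univ.filter (fun i : Fin n => rank i a < rank i b)).card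
        = Fintype.card (Fin n) := by
      simpa [Fintype.card_fin] using (by exact_mod_cast h :
        (Finset.univ.filter (fun i : Fin n => rank i a < rank i b)).card = n)
    have := Finset.eq_univ_of_card _ hcard
    have hi : i ∈ Finset.univ.filter (fun i : Fin n => rank i a < rank i b) := by
      rw [this]; exact Finset.mem_univ i
    simpa using hi
  · intro h
    have : Finset.univ.filter (fun i : Fin n => rank i a < rank i b) = Finset.univ := by
      apply Finset.filter_true_of_mem; intro i _; exact h i
    rw [this]; simp

lemma weightOne_acyclic (hn : 0 < n) (rank : Fin n → V → ℕ) (H : Set (V × V))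
    (h : ∀ e ∈ H, voteWeight n rank e.1 e.2 = 1) : ¬ hasCycle H := by
  rintro ⟨v, hv⟩
  have i0 : Fin n := ⟨0, hn⟩
  have hv' : Relation.TransGen (fun a b : V => rank i0 a < rank i0 b) v v := by
    refine Relation.TransGen.mono ?_ v v hv
    intro a b hab
    exact ((voteWeight_eq_one_iff hn rank a b).mp (h (a, b) hab)) i0
  have ht : Transitive (fun a b : V => rank i0 a < rank i0 b) :=
    fun a b c hab hbc => lt_trans hab hbc
  rw [@Relation.transGen_eq_self _ _ ⟨ht⟩] at hv'
  exact lt_irrefl _ hv'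

lemma weightOne_accepted (hn : 0 < n) (rank : Fin n → V → ℕ) (L : List (V × V))
    (hsort : L.Pairwise (fun e f => voteWeight n rank f.1 f.2 ≤ voteWeight n rank e.1 e.2))
    (H : Set (V × V)) (hH : ∀ e ∈ H, voteWeight n rank e.1 e.2 = 1)
    (a b : V) (hmem : (a, b) ∈ L) (hw : voteWeight n rank a b = 1) :
    (a, b) ∈ greedy L H := by
  induction L generalizing H with
  | nil => exact absurd hmem List.not_mem_nil
  | cons e rest ih =>
    rw [List.pairwise_cons] at hsort
    rw [greedy]
    rcases List.mem_cons.mp hmem with heq | hmem'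
    · subst heq
      have hall : ∀ f ∈ insert (a, b) H, voteWeight n rank f.1 f.2 = 1 := by
        rintro f (rfl | hf)
        · exact hw
        · exact hH f hf
      split
      · next hc => exact absurd hc (weightOne_acyclic hn rank _ hall)
      · exact greedy_mono _ _ (Set.mem_insert _ _)
    · have he1 : voteWeight n rank e.1 e.2 = 1 := by
        have h1 : voteWeight n rank a b ≤ voteWeight n rank e.1 e.2 := hsort.1 (a, b) hmem'
        have h2 := voteWeight_le_one hn rank e.1 e.2
        linarith [hw ▸ h1]
      have hall : ∀ f ∈ insert e H, voteWeight n rank f.1 f.2 = 1 := by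
        rintro f (rfl | hf)
        · exact he1
        · exact hH f hf
      split
      · exact ih hsort.2 H hH hmem'
      · exact ih hsort.2 _ hall hmem'

omit [Fintype V] in
lemma chain'_transGen_of_head {r : V → V → Prop} :
    ∀ (p : List V) (x : V), (x :: p).Chain' r → ∀ τ ∈ p, Relation.TransGen r x τ := by
  intro p
  induction p with
  | nil => simp
  | cons y rest ih =>
    intro x hc τ hτ
    have hxy : r x y := (List.isChain_cons_cons.mp hc).1
    rcases List.mem_cons.mp hτ with rfl | hτ'
    · exact Relation.TransGen.single hxy
    · exact Relation.TransGen.head hxy (ih y (List.isChain_cons_cons.mp hc).2 τ hτ')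

omit [Fintype V] in
lemma chain'_transGen_to_last {r : V → V → Prop} :
    ∀ (p : List V), p.Chain' r → ∀ z, p.getLast? = some z →
      ∀ τ ∈ p, τ = z ∨ Relation.TransGen r τ z := by
  intro p
  induction p with
  | nil => simp
  | cons x rest ih =>
    intro hc z hz τ hτ
    cases rest with
    | nil =>
      simp only [List.getLast?_singleton, Option.some.injEq] at hz
      rcases List.mem_singleton.mp hτ with rfl
      exact Or.inl hz
    | cons y rest' =>
      have hxy : r x y := (List.isChain_cons_cons.mp hc).1
      have hc' := (List.isChain_cons_cons.mp hc).2
      have hz' : (y :: rest').getLast? = some z := by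
        rwa [List.getLast?_cons_cons] at hz
      rcases List.mem_cons.mp hτ with rfl | hτ'
      · rcases ih hc' z hz' y List.mem_cons_self with rfl | h
        · exact Or.inr (Relation.TransGen.single hxy)
        · exact Or.inr (Relation.TransGen.head hxy h)
      · exact ih hc' z hz' τ hτ'

end Aux

/-- If Ranked Pairs accepts all edges of a directed path from `τB` to `τA`
(represented as a list `p` of vertices starting at `τB`, ending at `τA`, whose
consecutive pairs are accepted edges), then no intermediate transaction `τ` on the
path satisfies `w(τA, τ) = 1` (i.e. lies in `R_{τA}`) or `w(τ, τB) = 1` (i.e. lies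
in `P_{τB}`). -/

theorem accepted_path_is_local {V : Type*} [Fintype V] {n : ℕ} (hn : 0 < n)
    (rank : Fin n → V → ℕ) (hinj : ∀ i, Function.Injective (rank i))
    (L : List (V × V))
    (hmemL : ∀ a b : V, a ≠ b → (a, b) ∈ L)
    (hnd : L.Nodup)
    (hirr : ∀ e ∈ L, e.1 ≠ e.2)
    (hsort : L.Pairwise (fun e f => voteWeight n rank f.1 f.2 ≤ voteWeight n rank e.1 e.2))
    (τA τB : V) (p : List V)
    (hhead : p.head? = some τB) (hlast : p.getLast? = some τA)
    (hpath : p.Chain' (fun a b : V => (a, b) ∈ greedy L ∅)) :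
    ∀ τ ∈ p, τ ≠ τA → τ ≠ τB →
      voteWeight n rank τA τ ≠ 1 ∧ voteWeight n rank τ τB ≠ 1 := by
  intro τ hτ hτA hτB
  have hGacyc : ¬ hasCycle (greedy L ∅) := greedy_acyclic L ∅ empty_acyclic
  have hHemp : ∀ e ∈ (∅ : Set (V × V)), voteWeight n rank e.1 e.2 = 1 := by
    rintro e ⟨⟩
  constructor
  · intro hw
    have hedge : (τA, τ) ∈ greedy L ∅ :=
      weightOne_accepted hn rank L hsort ∅ hHemp τA τ (hmemL τA τ (Ne.symm hτA)) hw
    rcases chain'_transGen_to_last p hpath τA hlast τ hτ with rfl | h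
    · exact hτA rfl
    · exact hGacyc ⟨τA, Relation.TransGen.head hedge h⟩
  · intro hw
    have hedge : (τ, τB) ∈ greedy L ∅ :=
      weightOne_accepted hn rank L hsort ∅ hHemp τ τB (hmemL τ τB hτB) hw
    cases p with
    | nil => exact absurd hhead (by simp)
    | cons x rest =>
      have hx : x = τB := by simpa using hhead
      subst hx
      rcases List.mem_cons.mp hτ with rfl | hτ'
      · exact hτB rfl
      · have h := chain'_transGen_of_head rest x hpath τ hτ'
        exact hGacyc ⟨x, Relation.TransGen.tail h hedge⟩
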